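/- arXiv:1911.10077 — 2 statements merged into one kernel-verified Lean document; each statement's English description precedes it below -/
import Mathlib

section
/- There exists an order isomorphism between the real line ℝ with its usual order and the lexicographic product ℤ ×ₗ (ℝ ∪ {∞}), where ℝ ∪ {∞} is the linear order obtained by adjoining a top element ∞ to ℝ, and the lexicographic order compares the integer coordinate first. -/
open Set

noncomputable def eAux : WithTop ℝ → ℝ
  | ⊤ => 1
  | (y : ℝ) => (orderIsoIooNegOneOne ℝ y : ℝ)

lemma eAux_mem (y : WithTop ℝ) : eAux y ∈ Ioc (-1 : ℝ) 1 := by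
  cases y with
  | top => exact ⟨by norm_num [eAux], by norm_num [eAux]⟩
  | coe y =>
      have h := (orderIsoIooNegOneOne ℝ y).2
      exact ⟨h.1, h.2.le⟩

lemma eAux_strictMono : StrictMono eAux := by
  intro a b hab
  cases a with
  | top => exact absurd hab (by simp)
  | coe a =>
    cases b with
    | top =>
        have h := (orderIsoIooNegOneOne ℝ a).2
        exact h.2
    | coe b =>
        have hab' : a < b := by exact_mod_cast hab
        exact (orderIsoIooNegOneOne ℝ).strictMono hab'

noncomputable def fAux (p : ℤ ×ₗ (WithTop ℝ)) : ℝ :=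
  2 * ((ofLex p).1 : ℝ) + eAux (ofLex p).2

lemma fAux_strictMono : StrictMono fAux := by
  intro a b hab
  rcases Prod.Lex.lt_iff.1 hab with h | ⟨h1, h2⟩
  · have hmn : ((ofLex a).1 : ℝ) + 1 ≤ (ofLex b).1 := by exact_mod_cast h
    have hx := (eAux_mem (ofLex a).2).2
    have hy := (eAux_mem (ofLex b).2).1
    simp only [fAux]
    nlinarith
  · simp only [fAux, h1]
    exact add_lt_add_right (eAux_strictMono h2) _

lemma fAux_surjective : Function.Surjective fAux := by
  intro x
  set n : ℤ := ⌈(x - 1) / 2⌉ with hn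
  have h1 : (x - 1) / 2 ≤ n := Int.le_ceil _
  have h2 : (n : ℝ) < (x - 1) / 2 + 1 := Int.ceil_lt_add_one _
  have hx1 : x ≤ 2 * n + 1 := by linarith
  have hx2 : 2 * (n : ℝ) - 1 < x := by linarith
  by_cases h : x = 2 * n + 1
  · exact ⟨toLex (n, ⊤), by simp [fAux, eAux, h]⟩
  · have ht : x - 2 * n ∈ Ioo (-1 : ℝ) 1 := ⟨by linarith, lt_of_le_of_ne (by linarith) (by intro hc; exact h (by linarith))⟩
    refine ⟨toLex (n, ((orderIsoIooNegOneOne ℝ).symm ⟨x - 2 * n, ht⟩ : ℝ)), ?_⟩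
    simp only [fAux, ofLex_toLex, eAux]
    have : (orderIsoIooNegOneOne ℝ ((orderIsoIooNegOneOne ℝ).symm ⟨x - 2 * n, ht⟩) : ℝ) = x - 2 * n := by
      rw [OrderIso.apply_symm_apply]
    rw [this]; ring

theorem stmt_12 : Nonempty (ℝ ≃o ℤ ×ₗ (WithTop ℝ)) := by
  exact ⟨(StrictMono.orderIsoOfSurjective fAux fAux_strictMono fAux_surjective).symm⟩
end

section
/- Let M be a set, X a set with an equivalence relation E, and suppose given: a function f : X → (Fin k → M); bijections σ₁, σ₂ : M → M; and bijections τ₁, τ₂ : X → X such that for each i ∈ {1,2}, f(τᵢ x) = (fun j => σᵢ (f x j)) for all x ∈ X, and τᵢ respects E (x E y implies τᵢ x E τᵢ y). Assume (a) every m ∈ M with σ₁ m = m satisfies σ₂ m = m; (b) f eliminates E, i.e., for all x, y ∈ X, x E y iff f x = f y; and (c) there exists x₀ ∈ X with τ₁ x₀ E x₀ but not τ₂ x₀ E x₀. Then a contradiction follows (no such data can exist). -/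
theorem stmt_17 {M X : Type*} (k : ℕ) (E : X → X → Prop) (hE : Equivalence E)
    (f : X → Fin k → M) (σ₁ σ₂ : M → M)
    (hσ₁ : Function.Bijective σ₁) (hσ₂ : Function.Bijective σ₂)
    (τ₁ τ₂ : X → X)
    (hτ₁ : Function.Bijective τ₁) (hτ₂ : Function.Bijective τ₂)
    (hcomm₁ : ∀ x : X, f (τ₁ x) = fun j => σ₁ (f x j))
    (hcomm₂ : ∀ x : X, f (τ₂ x) = fun j => σ₂ (f x j))
    (hresp₁ : ∀ x y : X, E x y → E (τ₁ x) (τ₁ y))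
    (hresp₂ : ∀ x y : X, E x y → E (τ₂ x) (τ₂ y))
    (ha : ∀ m : M, σ₁ m = m → σ₂ m = m)
    (hb : ∀ x y : X, E x y ↔ f x = f y)
    (hc : ∃ x₀ : X, E (τ₁ x₀) x₀ ∧ ¬ E (τ₂ x₀) x₀) :
    False := by
  obtain ⟨x₀, h1, h2⟩ := hc
  apply h2
  rw [hb] at h1 ⊢
  rw [hcomm₁] at h1
  rw [hcomm₂]
  funext j
  exact ha _ (congrFun h1 j)
end
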